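/- Suppose there exists c > 0 with TC_ℓ = Ω(c^ℓ·ℓ^{2ℓ}) and GT_ℓ = O(d^ℓ·ℓ^{ℓ}) for some d > 0, where TC_ℓ and GT_ℓ are the counts of tree-child networks and galled trees on ℓ labelled leaves. Then ∑_{j=1}^n C(n,j)·GT_j / ∑_{j=1}^n C(n,j)·TC_j → 0 as n → ∞. -/

import Mathlib

open Filter

/- STATEMENT 13: If TC_ℓ = Ω(c^ℓ·ℓ^{2ℓ}) for some c > 0 and GT_ℓ = O(d^ℓ·ℓ^ℓ) for some
d > 0 (counts of tree-child networks and galled trees on ℓ labelled leaves), then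
∑_{j=1}^n C(n,j)·GT_j / ∑_{j=1}^n C(n,j)·TC_j → 0. -/
theorem galled_trees_negligible_in_treechild (TC GT : ℕ → ℕ)
    (hTC : ∃ c > (0 : ℝ), ∃ K > (0 : ℝ), ∀ᶠ ℓ : ℕ in atTop,
      K * c ^ ℓ * (ℓ : ℝ) ^ (2 * ℓ) ≤ TC ℓ)
    (hGT : ∃ d > (0 : ℝ), ∃ D > (0 : ℝ), ∀ᶠ ℓ : ℕ in atTop,
      (GT ℓ : ℝ) ≤ D * d ^ ℓ * (ℓ : ℝ) ^ ℓ) :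
    Tendsto (fun n : ℕ =>
        (∑ j ∈ Finset.Icc 1 n, (n.choose j : ℝ) * GT j) /
        (∑ j ∈ Finset.Icc 1 n, (n.choose j : ℝ) * TC j)) atTop (nhds 0) := by
  obtain ⟨c, hc, K, hK, hTCb⟩ := hTC
  obtain ⟨d, hd, D, hD, hGTb⟩ := hGT
  rw [eventually_atTop] at hTCb hGTb
  obtain ⟨L1, hL1⟩ := hTCb
  obtain ⟨L2, hL2⟩ := hGTb
  set e := max d 1 with he
  have he1 : (1 : ℝ) ≤ e := le_max_right _ _
  have he0 : (0 : ℝ) ≤ e := by linarith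
  set M := (∑ j ∈ Finset.range L2, (GT j : ℝ)) with hM
  have hM0 : 0 ≤ M := Finset.sum_nonneg fun _ _ => Nat.cast_nonneg _
  -- uniform bound on GT
  have hGT' : ∀ j : ℕ, (GT j : ℝ) ≤ M + D * e ^ j * (j : ℝ) ^ j := by
    intro j
    rcases lt_or_ge j L2 with h | h
    · have h1 : (GT j : ℝ) ≤ M :=
        Finset.single_le_sum (f := fun i => (GT i : ℝ))
          (fun i _ => Nat.cast_nonneg _) (Finset.mem_range.2 h)
      have h2 : 0 ≤ D * e ^ j * (j : ℝ) ^ j := by positivity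
      linarith
    · have h1 : (GT j : ℝ) ≤ D * d ^ j * (j : ℝ) ^ j := hL2 j h
      have h2 : D * d ^ j * (j : ℝ) ^ j ≤ D * e ^ j * (j : ℝ) ^ j := by
        gcongr
        exact le_max_left _ _
      linarith [hM0]
  -- numerator and denominator
  set Num : ℕ → ℝ := fun n => ∑ j ∈ Finset.Icc 1 n, (n.choose j : ℝ) * GT j with hNum
  set Den : ℕ → ℝ := fun n => ∑ j ∈ Finset.Icc 1 n, (n.choose j : ℝ) * TC j with hDen
  have hNum0 : ∀ n, 0 ≤ Num n := fun n =>
    Finset.sum_nonneg fun j _ => by positivity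
  have hDen0 : ∀ n, 0 ≤ Den n := fun n =>
    Finset.sum_nonneg fun j _ => by positivity
  -- numerator upper bound, for n ≥ 1
  have hNumB : ∀ n : ℕ, 1 ≤ n → Num n ≤ (M + D * e ^ n * (n : ℝ) ^ n) * 2 ^ n := by
    intro n hn
    have step : Num n ≤ ∑ j ∈ Finset.Icc 1 n,
        (n.choose j : ℝ) * (M + D * e ^ n * (n : ℝ) ^ n) := by
      apply Finset.sum_le_sum
      intro j hj
      obtain ⟨hj1, hjn⟩ := Finset.mem_Icc.mp hj
      have hb : (GT j : ℝ) ≤ M + D * e ^ n * (n : ℝ) ^ n := by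
        refine le_trans (hGT' j) ?_
        have h1 : e ^ j ≤ e ^ n := pow_le_pow_right₀ he1 hjn
        have h2 : (j : ℝ) ^ j ≤ (n : ℝ) ^ n := by
          calc (j : ℝ) ^ j ≤ (n : ℝ) ^ j := by
                apply pow_le_pow_left₀ (by positivity)
                exact_mod_cast hjn
            _ ≤ (n : ℝ) ^ n := by
                apply pow_le_pow_right₀ _ hjn
                exact_mod_cast hn
        have h3 : D * e ^ j * (j : ℝ) ^ j ≤ D * e ^ n * (n : ℝ) ^ n := by
          apply mul_le_mul (by apply mul_le_mul_of_nonneg_left h1 hD.le) h2 (by positivity)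
          positivity
        linarith
      exact mul_le_mul_of_nonneg_left hb (Nat.cast_nonneg _)
    refine step.trans ?_
    rw [← Finset.sum_mul]
    rw [mul_comm]
    apply mul_le_mul_of_nonneg_left _ (by positivity)
    have h2 : (∑ j ∈ Finset.Icc 1 n, (n.choose j : ℝ)) ≤
        ∑ j ∈ Finset.range (n + 1), (n.choose j : ℝ) := by
      apply Finset.sum_le_sum_of_subset_of_nonneg
      · intro x hx
        obtain ⟨_, hx2⟩ := Finset.mem_Icc.mp hx
        exact Finset.mem_range.mpr (Nat.lt_succ_of_le hx2)
      · intros; positivity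
    refine h2.trans ?_
    rw [← Nat.cast_sum, Nat.sum_range_choose]
    push_cast
    exact le_rfl
  -- denominator lower bound
  have hDenB : ∀ n : ℕ, max L1 1 ≤ n → K * c ^ n * (n : ℝ) ^ (2 * n) ≤ Den n := by
    intro n hn
    have hn1 : 1 ≤ n := le_trans (le_max_right _ _) hn
    have hnL : L1 ≤ n := le_trans (le_max_left _ _) hn
    have hmem : n ∈ Finset.Icc 1 n := Finset.mem_Icc.mpr ⟨hn1, le_refl n⟩
    calc K * c ^ n * (n : ℝ) ^ (2 * n) ≤ (TC n : ℝ) := hL1 n hnL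
      _ = (n.choose n : ℝ) * TC n := by rw [Nat.choose_self]; push_cast; ring
      _ ≤ Den n := Finset.single_le_sum (f := fun j => (n.choose j : ℝ) * TC j)
            (fun j _ => by positivity) hmem
  -- squeeze
  have key : Tendsto (fun n : ℕ => ((M + D) / K) * (1 / 2 : ℝ) ^ n) atTop (nhds 0) := by
    have := (tendsto_pow_atTop_nhds_zero_of_lt_one (r := (1/2 : ℝ)) (by norm_num)
      (by norm_num)).const_mul ((M + D) / K)
    simpa using this
  apply squeeze_zero' (Eventually.of_forall fun n => div_nonneg (hNum0 n) (hDen0 n)) _ key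
  -- eventual bound
  have hev : ∀ᶠ n : ℕ in atTop, 4 * e ≤ c * n :=
    (Tendsto.const_mul_atTop hc tendsto_natCast_atTop_atTop).eventually_ge_atTop (4 * e)
  filter_upwards [hev, eventually_ge_atTop (max L1 1)] with n hn1 hn2
  have hn : 1 ≤ n := le_trans (le_max_right _ _) hn2
  have hnR : (1 : ℝ) ≤ (n : ℝ) := by exact_mod_cast hn
  have hDenPos : 0 < K * c ^ n * (n : ℝ) ^ (2 * n) := by positivity
  have step1 : Num n / Den n ≤
      ((M + D * e ^ n * (n : ℝ) ^ n) * 2 ^ n) / (K * c ^ n * (n : ℝ) ^ (2 * n)) :=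
    div_le_div₀ (by positivity) (hNumB n hn) hDenPos (hDenB n hn2)
  refine step1.trans ?_
  rw [div_le_iff₀ hDenPos]
  have hKey : (M + D * e ^ n * (n : ℝ) ^ n) * 2 ^ n ≤
      (M + D) * ((1 / 2 : ℝ) ^ n * (c ^ n * (n : ℝ) ^ (2 * n))) := by
    have hpow : (n : ℝ) ^ (2 * n) = (n : ℝ) ^ n * (n : ℝ) ^ n := by
      rw [two_mul, pow_add]
    have ha : (2 : ℝ) ^ n ≤ (1 / 2 : ℝ) ^ n * (c ^ n * (n : ℝ) ^ (2 * n)) := by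
      rw [hpow]
      have : (1 / 2 : ℝ) ^ n * (c ^ n * ((n : ℝ) ^ n * (n : ℝ) ^ n)) =
          ((1 / 2) * c * (n : ℝ) * (n : ℝ)) ^ n := by
        rw [mul_pow, mul_pow, mul_pow]; ring
      rw [this]
      apply pow_le_pow_left₀ (by norm_num)
      nlinarith [he1, hc.le, hnR]
    have hb : e ^ n * (n : ℝ) ^ n * 2 ^ n ≤
        (1 / 2 : ℝ) ^ n * (c ^ n * (n : ℝ) ^ (2 * n)) := by
      rw [hpow]
      have h1 : e ^ n * (n : ℝ) ^ n * 2 ^ n = (2 * e * (n : ℝ)) ^ n := by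
        rw [mul_pow, mul_pow]; ring
      have h2 : (1 / 2 : ℝ) ^ n * (c ^ n * ((n : ℝ) ^ n * (n : ℝ) ^ n)) =
          ((1 / 2) * c * (n : ℝ) * (n : ℝ)) ^ n := by
        rw [mul_pow, mul_pow, mul_pow]; ring
      rw [h1, h2]
      apply pow_le_pow_left₀ (by positivity)
      nlinarith [he1, hc.le, hnR]
    calc (M + D * e ^ n * (n : ℝ) ^ n) * 2 ^ n
        = M * 2 ^ n + D * (e ^ n * (n : ℝ) ^ n * 2 ^ n) := by ring
      _ ≤ M * ((1 / 2 : ℝ) ^ n * (c ^ n * (n : ℝ) ^ (2 * n)))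
          + D * ((1 / 2 : ℝ) ^ n * (c ^ n * (n : ℝ) ^ (2 * n))) := by
          apply add_le_add
          · exact mul_le_mul_of_nonneg_left ha hM0
          · exact mul_le_mul_of_nonneg_left hb hD.le
      _ = (M + D) * ((1 / 2 : ℝ) ^ n * (c ^ n * (n : ℝ) ^ (2 * n))) := by ring
  refine hKey.trans ?_
  have hKne : K ≠ 0 := ne_of_gt hK
  rw [show ((M + D) / K) * (1 / 2 : ℝ) ^ n * (K * c ^ n * (n : ℝ) ^ (2 * n)) =
      (M + D) * ((1 / 2 : ℝ) ^ n * (c ^ n * (n : ℝ) ^ (2 * n))) * (K / K) by ring,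
    div_self hKne, mul_one]
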